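/- Let (x_t)_{t≥1} be vectors in R^d with ‖x_t‖ ≤ L, and V_t = λI + Σ_{k=1}^{t−1} x_k x_kᵀ for λ > 0. Then the number of indices t ∈ {1, …, T} for which ‖x_t‖²_{V_t⁻¹} > 1 is at most (3d/log 2)·log(1 + L²/(λ log 2)). -/

import Mathlib

open Matrix Finset

/-- The design matrix `V_t = λ I + ∑_{k < t} x_k x_kᵀ`. -/
noncomputable def designMatrix {d : ℕ} (lam : ℝ) (x : ℕ → Fin d → ℝ) (t : ℕ) :
    Matrix (Fin d) (Fin d) ℝ :=
  lam • (1 : Matrix (Fin d) (Fin d) ℝ) + ∑ k ∈ Finset.range t, vecMulVec (x k) (x k)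

section Aux

variable {d : ℕ}



lemma psd_vvt (v : Fin d → ℝ) : (vecMulVec v v).PosSemidef := by
  rw [posSemidef_iff_dotProduct_mulVec]
  constructor
  · ext i j
    simp [vecMulVec_apply, mul_comm, conjTranspose_apply]
  · intro y
    have h : star y ⬝ᵥ (vecMulVec v v) *ᵥ y = (v ⬝ᵥ y) * (v ⬝ᵥ y) := by
      simp only [star_trivial, dotProduct, mulVec, vecMulVec_apply, Finset.sum_mul,
        Finset.mul_sum]
      rw [Finset.sum_comm]
      congr 1; ext i; congr 1; ext j; ring
    rw [h]
    exact mul_self_nonneg _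

lemma quad_vvt (v y : Fin d → ℝ) : y ⬝ᵥ (vecMulVec v v) *ᵥ y = (v ⬝ᵥ y) * (v ⬝ᵥ y) := by
  simpa using (by
    simp only [star_trivial, dotProduct, mulVec, vecMulVec_apply, Finset.sum_mul, Finset.mul_sum]
    rw [Finset.sum_comm]
    congr 1; ext i; congr 1; ext j; ring :
      y ⬝ᵥ (vecMulVec v v) *ᵥ y = (v ⬝ᵥ y) * (v ⬝ᵥ y))

lemma smul_one_posdef {lam : ℝ} (hlam : 0 < lam) :
    (lam • (1 : Matrix (Fin d) (Fin d) ℝ)).PosDef := by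
  rw [smul_one_eq_diagonal]
  exact Matrix.PosDef.diagonal (fun _ => hlam)

lemma psd_sum (x : ℕ → Fin d → ℝ) (s : Finset ℕ) :
    (∑ k ∈ s, vecMulVec (x k) (x k)).PosSemidef := by
  classical
  induction s using Finset.induction_on with
  | empty => simpa using Matrix.PosSemidef.zero
  | insert _ _ h ih => rw [Finset.sum_insert h]; exact (psd_vvt _).add ih


lemma inv_quadform_le {A B : Matrix (Fin d) (Fin d) ℝ} (hA : A.PosDef) (hB : B.PosDef)
    (hle : ∀ y, y ⬝ᵥ A *ᵥ y ≤ y ⬝ᵥ B *ᵥ y) (v : Fin d → ℝ) :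
    v ⬝ᵥ B⁻¹ *ᵥ v ≤ v ⬝ᵥ A⁻¹ *ᵥ v := by
  set u := B⁻¹ *ᵥ v with hu
  set w := A⁻¹ *ᵥ v with hw
  have hAw : A *ᵥ w = v := by
    rw [hw, mulVec_mulVec, mul_nonsing_inv _ (isUnit_iff_isUnit_det _ |>.1 hA.isUnit), one_mulVec]
  have hBu : B *ᵥ u = v := by
    rw [hu, mulVec_mulVec, mul_nonsing_inv _ (isUnit_iff_isUnit_det _ |>.1 hB.isUnit), one_mulVec]
  have ht : Aᵀ = A := by
    ext i j
    simpa using congrFun (congrFun hA.isHermitian i) j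
  have symmA : ∀ a b : Fin d → ℝ, a ⬝ᵥ A *ᵥ b = b ⬝ᵥ A *ᵥ a := by
    intro a b
    rw [dotProduct_mulVec, ← mulVec_transpose, ht, dotProduct_comm]
  have key : 0 ≤ (u - w) ⬝ᵥ A *ᵥ (u - w) := by
    simpa using hA.posSemidef.dotProduct_mulVec_nonneg (u - w)
  have expand : (u - w) ⬝ᵥ A *ᵥ (u - w)
      = u ⬝ᵥ A *ᵥ u - 2 * (u ⬝ᵥ v) + w ⬝ᵥ v := by
    rw [mulVec_sub, dotProduct_sub, sub_dotProduct, sub_dotProduct]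
    have h1 : u ⬝ᵥ A *ᵥ w = u ⬝ᵥ v := by rw [hAw]
    have h2 : w ⬝ᵥ A *ᵥ u = u ⬝ᵥ v := by rw [symmA, hAw]
    have h3 : w ⬝ᵥ A *ᵥ w = w ⬝ᵥ v := by rw [hAw]
    rw [h1, h2, h3]; ring
  have hBuu : u ⬝ᵥ A *ᵥ u ≤ u ⬝ᵥ v := by
    have := hle u; rwa [hBu] at this
  have hvu : v ⬝ᵥ u = u ⬝ᵥ v := dotProduct_comm _ _
  have hvw : v ⬝ᵥ w = w ⬝ᵥ v := dotProduct_comm _ _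
  rw [hvu, hvw]
  linarith


lemma det_add_vvt {A : Matrix (Fin d) (Fin d) ℝ} (hA : A.PosDef) (v : Fin d → ℝ) :
    (A + vecMulVec v v).det = A.det * (1 + v ⬝ᵥ A⁻¹ *ᵥ v) := by
  rw [vecMulVec_eq Unit, det_add_replicateCol_mul_replicateRow hA.det_pos.ne'.isUnit]
  congr 1
  rw [det_unique]
  simp [Matrix.mul_apply, dotProduct, mulVec, Finset.sum_mul, Finset.mul_sum]
  rw [Finset.sum_comm]
  exact Finset.sum_congr rfl fun i _ => Finset.sum_congr rfl fun j _ => by ring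

lemma trace_vvt (v : Fin d → ℝ) : (vecMulVec v v).trace = v ⬝ᵥ v := by
  simp [Matrix.trace, Matrix.diag, vecMulVec_apply, dotProduct]

lemma trace_eq_sum_eigs {A : Matrix (Fin d) (Fin d) ℝ} (hA : A.IsHermitian) :
    A.trace = ∑ i, hA.eigenvalues i := by
  nth_rewrite 1 [hA.spectral_theorem]
  rw [Unitary.conjStarAlgAut_apply]
  rw [Matrix.trace_mul_comm, ← Matrix.mul_assoc]
  have : (star (hA.eigenvectorUnitary : Matrix (Fin d) (Fin d) ℝ)) *
      (hA.eigenvectorUnitary : Matrix (Fin d) (Fin d) ℝ) = 1 := by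
    exact Unitary.coe_star_mul_self _
  rw [this, one_mul, Matrix.trace_diagonal]
  simp

lemma det_le_trace_pow {A : Matrix (Fin d) (Fin d) ℝ} (hd : 0 < d) (hA : A.PosSemidef) :
    A.det ≤ (A.trace / d) ^ d := by
  have he := hA.isHermitian.det_eq_prod_eigenvalues
  have hnn : ∀ i : Fin d, 0 ≤ hA.isHermitian.eigenvalues i := hA.eigenvalues_nonneg
  have hd' : (0:ℝ) < d := by exact_mod_cast hd
  have amgm := Real.geom_mean_le_arith_mean_weighted Finset.univ
      (fun _ : Fin d => 1 / d) hA.isHermitian.eigenvalues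
      (fun i _ => by positivity)
      (by simp [Finset.card_univ]; field_simp)
      (fun i _ => hnn i)
  have key : ∏ i, hA.isHermitian.eigenvalues i ≤ (A.trace / d) ^ d := by
    have h1 : ∏ i, hA.isHermitian.eigenvalues i
        = (∏ i, hA.isHermitian.eigenvalues i ^ (1 / (d:ℝ))) ^ (d:ℕ) := by
      rw [← Finset.prod_pow]
      congr 1; ext i
      rw [← Real.rpow_natCast (_ ^ (1/(d:ℝ))) d, ← Real.rpow_mul (hnn i)]
      rw [one_div, inv_mul_cancel₀ hd'.ne', Real.rpow_one]
    rw [h1]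
    apply pow_le_pow_left₀ (Finset.prod_nonneg fun i _ => Real.rpow_nonneg (hnn i) _)
    calc ∏ i, hA.isHermitian.eigenvalues i ^ (1 / (d:ℝ))
        ≤ ∑ i, (1/(d:ℝ)) * hA.isHermitian.eigenvalues i := amgm
      _ = A.trace / d := by
          rw [← Finset.mul_sum, ← trace_eq_sum_eigs hA.isHermitian]; ring
  calc A.det = ∏ i, hA.isHermitian.eigenvalues i := by
        rw [he]; norm_num
    _ ≤ _ := key


lemma two_thirds_lt_logc : (2:ℝ)/3 < Real.log (1 + 1 / Real.log 2) := by
  have l2' : Real.log 2 < 0.6931471808 := Real.log_two_lt_d9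
  have log2pos : (0:ℝ) < Real.log 2 := Real.log_pos one_lt_two
  have e1 : Real.exp 1 < 2.7182818286 := Real.exp_one_lt_d9
  have e1p : (0:ℝ) < Real.exp 1 := Real.exp_pos 1
  have h3 : Real.exp (2/3) ^ (3:ℕ) = Real.exp 1 ^ (2:ℕ) := by
    rw [← Real.exp_nat_mul, ← Real.exp_nat_mul]; norm_num
  have hep : (0:ℝ) < Real.exp (2/3) := Real.exp_pos _
  have hlt : Real.exp (2/3) < 2.44 := by
    by_contra hcon
    push_neg at hcon
    have hcube : (2.44:ℝ)^(3:ℕ) ≤ Real.exp (2/3)^(3:ℕ) :=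
      pow_le_pow_left₀ (by norm_num) hcon 3
    have hsq : Real.exp 1 ^ (2:ℕ) < 2.7182818286^(2:ℕ) :=
      pow_lt_pow_left₀ e1 e1p.le (by norm_num)
    rw [h3] at hcube
    nlinarith
  have harg : (2.44:ℝ) < 1 + 1 / Real.log 2 := by
    have hinv : (1.44:ℝ) < 1 / Real.log 2 := by
      rw [lt_div_iff₀ log2pos]; linarith
    linarith
  have := Real.log_lt_log hep (lt_trans hlt harg)
  rwa [Real.log_exp] at this

lemma final_count_bound {m dd : ℕ} {lam L : ℝ} (hd : 0 < dd) (hlam : 0 < lam) (hL : 0 < L)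
    (hml : m ≠ 0 → lam < L ^ 2)
    (h2 : (m:ℝ) * Real.log 2 ≤ dd * Real.log (1 + m * L ^ 2 / (dd * lam))) :
    (m:ℝ) ≤ (3 * dd / Real.log 2) * Real.log (1 + L ^ 2 / (lam * Real.log 2)) := by
  have log2pos : (0:ℝ) < Real.log 2 := Real.log_pos one_lt_two
  set C := Real.log (1 + L ^ 2 / (lam * Real.log 2)) with hC
  have ha : (0:ℝ) ≤ L ^ 2 / (lam * Real.log 2) := by positivity
  have hCnn : 0 ≤ C := Real.log_nonneg (by linarith)
  rcases Nat.eq_zero_or_pos m with hm | hm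
  · subst hm; simp; positivity
  have hlL : lam < L ^ 2 := hml hm.ne'
  have hddp : (0:ℝ) < dd := by exact_mod_cast hd
  have hmp : (0:ℝ) < m := by exact_mod_cast hm
  have hCgt : 2/3 < C := by
    refine lt_of_lt_of_le two_thirds_lt_logc ?_
    apply Real.log_le_log (by positivity)
    have h5 : 1 / Real.log 2 ≤ L ^ 2 / (lam * Real.log 2) := by
      rw [div_le_div_iff₀ log2pos (by positivity)]
      nlinarith
    linarith
  set y := (m:ℝ) * Real.log 2 / dd with hy
  have hyp : 0 < y := by positivity
  have hsplit : Real.log (1 + m * L ^ 2 / (dd * lam)) ≤ C + Real.log (1 + y) := by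
    have hid : (1 + L ^ 2 / (lam * Real.log 2)) * (1 + y)
        = 1 + m * L ^ 2 / (dd * lam) + (L ^ 2 / (lam * Real.log 2) + y) := by
      rw [hy]; field_simp; ring
    have hle : 1 + (m:ℝ) * L ^ 2 / (dd * lam)
        ≤ (1 + L ^ 2 / (lam * Real.log 2)) * (1 + y) := by
      rw [hid]; linarith
    calc Real.log (1 + m * L ^ 2 / (dd * lam))
        ≤ Real.log ((1 + L ^ 2 / (lam * Real.log 2)) * (1 + y)) :=
          Real.log_le_log (by positivity) hle
      _ = C + Real.log (1 + y) := by
          rw [Real.log_mul (by positivity) (by positivity)]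
  have hykey : y ≤ C + Real.log (1 + y) := by
    have h4 : (m:ℝ) * Real.log 2 ≤ dd * (C + Real.log (1 + y)) := by
      refine le_trans h2 ?_
      have := mul_le_mul_of_nonneg_left hsplit hddp.le
      linarith
    rw [hy, div_le_iff₀ hddp]
    linarith
  have hy3C : y ≤ 3 * C := by
    by_contra hcon
    push_neg at hcon
    have hy2 : 2 < y := by linarith
    have e0 : (1 + y/6) ^ (4:ℕ) = 1 + (2/3)*y + y^2/6 + y^3/54 + y^4/1296 := by ring
    have e1 : 1 + y ≤ (1 + y/6) ^ (4:ℕ) := by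
      rw [e0]
      nlinarith [mul_pos hyp (show (0:ℝ) < y - 2 by linarith), pow_pos hyp 3, pow_pos hyp 4]
    have e2 : (1 + y/6) ^ (4:ℕ) ≤ Real.exp (y/6) ^ (4:ℕ) := by
      apply pow_le_pow_left₀ (by linarith)
      linarith [Real.add_one_le_exp (y/6)]
    have e3 : Real.exp (y/6) ^ (4:ℕ) = Real.exp (2/3 * y) := by
      rw [← Real.exp_nat_mul]; congr 1; push_cast; ring
    have e4 : Real.log (1 + y) ≤ 2/3 * y := by
      have h6 : 1 + y ≤ Real.exp (2/3 * y) := by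
        rw [← e3]; exact le_trans e1 e2
      have := Real.log_le_log (by linarith : (0:ℝ) < 1 + y) h6
      rwa [Real.log_exp] at this
    linarith
  rw [hy, div_le_iff₀ hddp] at hy3C
  calc (m:ℝ) = (m * Real.log 2) / Real.log 2 := by field_simp
    _ ≤ (3 * C * dd) / Real.log 2 := by gcongr
    _ = (3 * dd / Real.log 2) * C := by ring



noncomputable def Wmat (lam : ℝ) (x : ℕ → Fin d → ℝ) (s : Finset ℕ) :
    Matrix (Fin d) (Fin d) ℝ :=
  lam • (1 : Matrix (Fin d) (Fin d) ℝ) + ∑ k ∈ s, vecMulVec (x k) (x k)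

lemma designMatrix_eq_Wmat (lam : ℝ) (x : ℕ → Fin d → ℝ) (t : ℕ) :
    designMatrix lam x t = Wmat lam x (Finset.range t) := rfl

lemma Wmat_posdef {lam : ℝ} (hlam : 0 < lam) (x : ℕ → Fin d → ℝ) (s : Finset ℕ) :
    (Wmat lam x s).PosDef :=
  (smul_one_posdef hlam).add_posSemidef (psd_sum x s)

lemma Wmat_quad_mono {lam : ℝ} (x : ℕ → Fin d → ℝ) {s t : Finset ℕ} (h : s ⊆ t)
    (y : Fin d → ℝ) : y ⬝ᵥ (Wmat lam x s) *ᵥ y ≤ y ⬝ᵥ (Wmat lam x t) *ᵥ y := by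
  have hdecomp : Wmat lam x t = Wmat lam x s + ∑ k ∈ t \ s, vecMulVec (x k) (x k) := by
    unfold Wmat
    rw [← Finset.sum_sdiff h]
    abel
  rw [hdecomp, add_mulVec, dotProduct_add]
  have : 0 ≤ y ⬝ᵥ (∑ k ∈ t \ s, vecMulVec (x k) (x k)) *ᵥ y := by
    simpa using (psd_sum x (t \ s)).dotProduct_mulVec_nonneg y
  linarith

lemma det_lower {lam : ℝ} (hlam : 0 < lam) (x : ℕ → Fin d → ℝ) (s : Finset ℕ)
    (hbig : ∀ a ∈ s, 1 < x a ⬝ᵥ (designMatrix lam x a)⁻¹ *ᵥ x a) :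
    2 ^ s.card * lam ^ d ≤ (Wmat lam x s).det := by
  induction s using Finset.induction_on_max with
  | empty =>
      simp only [Finset.card_empty, pow_zero, one_mul]
      have : Wmat lam x (∅ : Finset ℕ) = lam • 1 := by simp [Wmat]
      rw [this, Matrix.det_smul, Matrix.det_one]
      simp
  | insert a s hmax ih =>
      have hanotin : a ∉ s := fun h => lt_irrefl a (hmax a h)
      have hbig' : ∀ b ∈ s, 1 < x b ⬝ᵥ (designMatrix lam x b)⁻¹ *ᵥ x b :=
        fun b hb => hbig b (Finset.mem_insert_of_mem hb)
      have ih' := ih hbig'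
      have hW : Wmat lam x (insert a s) = Wmat lam x s + vecMulVec (x a) (x a) := by
        unfold Wmat
        rw [Finset.sum_insert hanotin]
        abel
      have hsub : s ⊆ Finset.range a := fun b hb => Finset.mem_range.2 (hmax b hb)
      have hgt : 1 < x a ⬝ᵥ (Wmat lam x s)⁻¹ *ᵥ x a := by
        refine lt_of_lt_of_le (hbig a (Finset.mem_insert_self a s)) ?_
        rw [designMatrix_eq_Wmat]
        exact inv_quadform_le (Wmat_posdef hlam x s) (Wmat_posdef hlam x (Finset.range a))
          (Wmat_quad_mono x hsub) (x a)
      have hdetpos : 0 < (Wmat lam x s).det := (Wmat_posdef hlam x s).det_pos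
      rw [hW, det_add_vvt (Wmat_posdef hlam x s), Finset.card_insert_of_notMem hanotin]
      calc 2 ^ (s.card + 1) * lam ^ d = 2 * (2 ^ s.card * lam ^ d) := by ring
        _ ≤ 2 * (Wmat lam x s).det := by linarith
        _ ≤ (Wmat lam x s).det * (1 + x a ⬝ᵥ (Wmat lam x s)⁻¹ *ᵥ x a) := by nlinarith



lemma smul_one_inv_quad {lam : ℝ} (hlam : 0 < lam) (v : Fin d → ℝ) :
    v ⬝ᵥ (lam • (1 : Matrix (Fin d) (Fin d) ℝ))⁻¹ *ᵥ v = lam⁻¹ * (v ⬝ᵥ v) := by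
  have hinv : (lam • (1 : Matrix (Fin d) (Fin d) ℝ))⁻¹ = lam⁻¹ • 1 := by
    apply Matrix.inv_eq_right_inv
    rw [smul_mul_assoc, Matrix.mul_smul, one_mul, smul_smul, mul_inv_cancel₀ hlam.ne', one_smul]
  rw [hinv, Matrix.smul_mulVec, one_mulVec, dotProduct_smul, smul_eq_mul]

theorem count_large_elliptical_terms
    {d : ℕ} (hd : 0 < d) {lam L : ℝ} (hlam : 0 < lam) (hL : 0 < L)
    (x : ℕ → Fin d → ℝ) (hx : ∀ t, Real.sqrt (x t ⬝ᵥ x t) ≤ L) (T : ℕ) :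
    (((Finset.range T).filter
        (fun t => 1 < x t ⬝ᵥ (designMatrix lam x t)⁻¹.mulVec (x t))).card : ℝ)
      ≤ (3 * d / Real.log 2) * Real.log (1 + L ^ 2 / (lam * Real.log 2)) := by
  classical
  set s := (Finset.range T).filter
      (fun t => 1 < x t ⬝ᵥ (designMatrix lam x t)⁻¹.mulVec (x t)) with hs
  set m := s.card with hm
  have hbig : ∀ a ∈ s, 1 < x a ⬝ᵥ (designMatrix lam x a)⁻¹ *ᵥ x a := by
    intro a ha
    exact (Finset.mem_filter.1 ha).2
  have hxx : ∀ t, x t ⬝ᵥ x t ≤ L ^ 2 := by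
    intro t
    have h0 : 0 ≤ x t ⬝ᵥ x t := Finset.sum_nonneg fun i _ => mul_self_nonneg _
    have := hx t
    nlinarith [Real.sq_sqrt h0, Real.sqrt_nonneg (x t ⬝ᵥ x t)]
  -- lam < L^2 when m ≠ 0
  have hml : m ≠ 0 → lam < L ^ 2 := by
    intro hm0
    obtain ⟨a, ha⟩ := Finset.card_pos.1 (Nat.pos_of_ne_zero hm0)
    have h1 := hbig a ha
    have h2 : x a ⬝ᵥ (designMatrix lam x a)⁻¹ *ᵥ x a ≤ lam⁻¹ * (x a ⬝ᵥ x a) := by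
      rw [← smul_one_inv_quad hlam]
      have hqm : ∀ y, y ⬝ᵥ (lam • (1 : Matrix (Fin d) (Fin d) ℝ)) *ᵥ y
          ≤ y ⬝ᵥ (designMatrix lam x a) *ᵥ y := by
        intro y
        have : lam • (1 : Matrix (Fin d) (Fin d) ℝ) = Wmat lam x ∅ := by simp [Wmat]
        rw [this]
        exact Wmat_quad_mono x (Finset.empty_subset _) y
      exact inv_quadform_le (by simpa [Wmat] using Wmat_posdef hlam x (∅ : Finset ℕ))
        (by exact Wmat_posdef hlam x (Finset.range a)) hqm (x a)
    have h3 : lam⁻¹ * (x a ⬝ᵥ x a) ≤ lam⁻¹ * L ^ 2 := by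
      apply mul_le_mul_of_nonneg_left (hxx a) (by positivity)
    have : 1 < lam⁻¹ * L ^ 2 := lt_of_lt_of_le (lt_of_lt_of_le h1 h2) h3
    rw [lt_inv_mul_iff₀ hlam] at this
    linarith
  -- determinant chain
  have hdlow : 2 ^ m * lam ^ d ≤ (Wmat lam x s).det := det_lower hlam x s hbig
  have htrace : (Wmat lam x s).trace = d * lam + ∑ k ∈ s, (x k ⬝ᵥ x k) := by
    unfold Wmat
    rw [Matrix.trace_add, Matrix.trace_smul, Matrix.trace_one, Matrix.trace_sum]
    simp [trace_vvt, smul_eq_mul, Fintype.card_fin, mul_comm]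
  have htr_le : (Wmat lam x s).trace ≤ d * lam + m * L ^ 2 := by
    rw [htrace]
    have : ∑ k ∈ s, (x k ⬝ᵥ x k) ≤ m * L ^ 2 := by
      calc ∑ k ∈ s, (x k ⬝ᵥ x k) ≤ ∑ k ∈ s, L ^ 2 :=
            Finset.sum_le_sum fun k _ => hxx k
        _ = m * L ^ 2 := by rw [Finset.sum_const, hm]; simp [mul_comm]
    linarith
  have hddp : (0:ℝ) < d := by exact_mod_cast hd
  have hdup : (Wmat lam x s).det ≤ (lam + m * L ^ 2 / d) ^ d := by
    refine le_trans (det_le_trace_pow hd (Wmat_posdef hlam x s).posSemidef) ?_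
    apply pow_le_pow_left₀
    · have h0 : 0 ≤ (Wmat lam x s).trace := by
        rw [htrace]
        have : 0 ≤ ∑ k ∈ s, (x k ⬝ᵥ x k) :=
          Finset.sum_nonneg fun k _ => Finset.sum_nonneg fun i _ => mul_self_nonneg _
        positivity
      positivity
    · rw [div_le_iff₀ hddp]
      calc (Wmat lam x s).trace ≤ d * lam + m * L ^ 2 := htr_le
        _ = (lam + m * L ^ 2 / d) * d := by field_simp
  have hchain : 2 ^ m * lam ^ d ≤ (lam + m * L ^ 2 / d) ^ d := le_trans hdlow hdup
  -- take logs
  have hlog : (m:ℝ) * Real.log 2 ≤ d * Real.log (1 + m * L ^ 2 / (d * lam)) := by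
    have hLHSpos : (0:ℝ) < 2 ^ m * lam ^ d := by positivity
    have := Real.log_le_log hLHSpos hchain
    rw [Real.log_mul (by positivity) (by positivity), Real.log_pow, Real.log_pow] at this
    have harg : lam + (m:ℝ) * L ^ 2 / d = lam * (1 + m * L ^ 2 / (d * lam)) := by
      field_simp
    rw [harg, Real.log_pow, Real.log_mul hlam.ne' (by positivity)] at this
    push_cast at this ⊢
    linarith
  exact final_count_bound hd hlam hL hml hlog


end Aux
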